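/- arXiv:2208.13820 — 4 statements merged into one kernel-verified Lean document; each statement's English description precedes it below -/
import Mathlib

section
/- If a self-adjoint operator A on an N-dimensional inner product space has a kernel of dimension at least m, and A is k-nonnegative for some k ≤ m + 1, then A is nonnegative (positive semidefinite). -/
/-- A list of eigenvalues `λ₁ ≤ λ₂ ≤ …` (0-indexed) is `k`-nonnegative if
`λ₁ + … + λ_{⌊k⌋} + (k − ⌊k⌋) λ_{⌊k⌋+1} ≥ 0`. -/
def kNonneg (lam : ℕ → ℝ) (k : ℝ) : Prop :=
  0 ≤ (∑ i ∈ Finset.range ⌊k⌋₊, lam i) + (k - (⌊k⌋₊ : ℝ)) * lam ⌊k⌋₊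

/-- The increasingly sorted eigenvalues of a symmetric real matrix, extended by `0`
beyond index `N`. -/
noncomputable def sortedEigenvalues {N : ℕ} {A : Matrix (Fin N) (Fin N) ℝ}
    (hA : A.IsHermitian) : ℕ → ℝ :=
  fun i => if h : i < N then (hA.eigenvalues ∘ Tuple.sort hA.eigenvalues) ⟨i, h⟩ else 0

/-- If a self-adjoint operator `A` on an `N`-dimensional inner product space has a kernel of
dimension at least `m`, and `A` is `k`-nonnegative for some `k ≤ m + 1`, then `A` is
positive semidefinite. -/
theorem posSemidef_of_kernel_of_kNonneg (N : ℕ) (A : Matrix (Fin N) (Fin N) ℝ)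
    (hA : A.IsHermitian) (m : ℕ)
    (hker : m ≤ Module.finrank ℝ (LinearMap.ker A.mulVecLin))
    (k : ℝ) (hk1 : 1 ≤ k) (hkm : k ≤ (m : ℝ) + 1)
    (hnn : kNonneg (sortedEigenvalues hA) k) :
    A.PosSemidef := by
  classical
  set μ : Fin N → ℝ := hA.eigenvalues ∘ Tuple.sort hA.eigenvalues with hμ
  have hmono : Monotone μ := Tuple.monotone_sort _
  apply hA.posSemidef_iff_eigenvalues_nonneg.mpr
  by_contra hcon
  simp only [Pi.le_def, Pi.zero_apply, not_forall, not_le] at hcon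
  obtain ⟨i0, hi0⟩ := hcon
  -- the smallest sorted eigenvalue is negative
  have hN : 0 < N := Fin.pos_iff_nonempty.mpr ⟨i0⟩
  have hμ0 : μ ⟨0, hN⟩ < 0 := by
    have : μ ((Tuple.sort hA.eigenvalues)⁻¹ i0) < 0 := by
      simpa [hμ] using hi0
    exact lt_of_le_of_lt (hmono (Fin.mk_le_of_le_val (Nat.zero_le _))) this
  -- nullity bound: at least m eigenvalues are zero
  have hrank : A.rank + Module.finrank ℝ (LinearMap.ker A.mulVecLin) = N := by
    have := LinearMap.finrank_range_add_finrank_ker A.mulVecLin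
    simpa [Matrix.rank] using this
  have hcard : m ≤ Fintype.card {i // hA.eigenvalues i = 0} := by
    have h1 : Fintype.card {i // hA.eigenvalues i ≠ 0} +
        Fintype.card {i // hA.eigenvalues i = 0} = N := by
      have h3 := Fintype.card_subtype_compl (fun i => hA.eigenvalues i = 0)
      have h4 : Fintype.card {i // hA.eigenvalues i = 0} ≤ Fintype.card (Fin N) :=
        Fintype.card_subtype_le _
      simp only [Fintype.card_fin] at h3 h4 ⊢
      have h5 : Fintype.card {i // hA.eigenvalues i ≠ 0} =
          Fintype.card {x // ¬hA.eigenvalues x = 0} := rfl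
      omega
    have h2 := hA.rank_eq_card_non_zero_eigs
    omega
  -- transfer to sorted positions via the sort permutation
  let Z : Finset (Fin N) := Finset.univ.filter (fun j => μ j = 0)
  have hZcard : m ≤ Z.card := by
    have : Fintype.card {i // hA.eigenvalues i = 0} =
        (Finset.univ.filter (fun i => hA.eigenvalues i = 0)).card :=
      Fintype.card_subtype _
    have hbij : Z.card = (Finset.univ.filter (fun i => hA.eigenvalues i = 0)).card := by
      apply Finset.card_bij (fun j _ => Tuple.sort hA.eigenvalues j)
      · intro a ha
        simp only [Z, Finset.mem_filter, Finset.mem_univ, true_and, hμ,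
          Function.comp] at ha ⊢
        exact ha
      · intro a _ b _ hab
        exact (Tuple.sort hA.eigenvalues).injective hab
      · intro b hb
        refine ⟨(Tuple.sort hA.eigenvalues)⁻¹ b, ?_, by simp⟩
        simp only [Z, Finset.mem_filter, Finset.mem_univ, true_and, hμ,
          Function.comp, Equiv.Perm.inv_def, Equiv.apply_symm_apply] at hb ⊢
        exact hb
      
    omega
  -- the set of nonpositive sorted eigenvalues has ≥ m+1 elements
  let S : Finset (Fin N) := Finset.univ.filter (fun j => μ j ≤ 0)
  have hZS : Z ⊆ S := by
    intro j hj
    simp only [Z, S, Finset.mem_filter, Finset.mem_univ, true_and] at hj ⊢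
    exact le_of_eq hj
  have h0S : (⟨0, hN⟩ : Fin N) ∈ S := by
    simp only [S, Finset.mem_filter, Finset.mem_univ, true_and]
    exact le_of_lt hμ0
  have h0Z : (⟨0, hN⟩ : Fin N) ∉ Z := by
    simp only [Z, Finset.mem_filter, Finset.mem_univ, true_and]
    exact ne_of_lt hμ0
  have hScard : m + 1 ≤ S.card := by
    have : Z.card + 1 ≤ S.card := by
      have := Finset.card_lt_card (Finset.ssubset_iff_of_subset hZS |>.mpr
        ⟨⟨0, hN⟩, h0S, h0Z⟩)
      omega
    omega
  -- there is j ∈ S with m ≤ j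
  obtain ⟨j, hjS, hjm⟩ : ∃ j ∈ S, m ≤ (j : ℕ) := by
    by_contra hc
    push_neg at hc
    have : S.card ≤ (Finset.range m).card :=
      Finset.card_le_card_of_injOn (fun j => (j : ℕ))
        (fun j hj => Finset.mem_range.mpr (hc j hj))
        (fun a _ b _ hab => Fin.val_injective hab)
    simp only [Finset.card_range] at this
    omega
  have hjneg : μ j ≤ 0 := by
    simpa [S] using hjS
  -- all sorted eigenvalues with index ≤ m are ≤ 0
  have hkey : ∀ i : ℕ, i ≤ m → sortedEigenvalues hA i ≤ 0 := by
    intro i hi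
    unfold sortedEigenvalues
    split
    · next h =>
      refine le_trans (hmono ?_) hjneg
      exact Fin.mk_le_of_le_val (le_trans hi hjm)
    · exact le_refl 0
  -- floor bounds
  have hk0 : (0 : ℝ) ≤ k := le_trans zero_le_one hk1
  have hfl1 : 1 ≤ ⌊k⌋₊ := Nat.le_floor (by exact_mod_cast hk1)
  have hflm : ⌊k⌋₊ ≤ m + 1 := by
    have h1 := Nat.floor_le_floor hkm
    have h2 : ⌊(m : ℝ) + 1⌋₊ = m + 1 := by
      rw [show ((m : ℝ) + 1) = ((m + 1 : ℕ) : ℝ) by push_cast; ring, Nat.floor_natCast]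
    omega
  -- the sum is < 0 : contradiction
  unfold kNonneg at hnn
  have h00 : sortedEigenvalues hA 0 < 0 := by
    have heq : sortedEigenvalues hA 0 = μ ⟨0, hN⟩ := by
      unfold sortedEigenvalues
      rw [dif_pos hN]
    rw [heq]; exact hμ0
  have hsum : (∑ i ∈ Finset.range ⌊k⌋₊, sortedEigenvalues hA i) < 0 := by
    have := Finset.sum_lt_sum (s := Finset.range ⌊k⌋₊)
      (f := fun i => sortedEigenvalues hA i) (g := fun _ => (0 : ℝ))
      (fun i hi => hkey i (by have := Finset.mem_range.mp hi; omega))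
      ⟨0, Finset.mem_range.mpr (by omega), by simpa using h00⟩
    simpa using this
  have hterm : (k - (⌊k⌋₊ : ℝ)) * sortedEigenvalues hA ⌊k⌋₊ ≤ 0 := by
    rcases Nat.lt_or_ge ⌊k⌋₊ (m + 1) with h | h
    · exact mul_nonpos_of_nonneg_of_nonpos
        (sub_nonneg.mpr (Nat.floor_le hk0)) (hkey _ (by omega))
    · have hfeq : ⌊k⌋₊ = m + 1 := le_antisymm hflm h
      have hco : k - (⌊k⌋₊ : ℝ) = 0 := by
        have h1 : ((m : ℝ) + 1) ≤ k := by
          have := Nat.floor_le hk0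
          rw [hfeq] at this
          push_cast at this
          linarith
        rw [hfeq]
        push_cast
        linarith
      rw [hco, zero_mul]
  linarith
end

section
/- For an algebraic curvature tensor on ℝⁿ = ℝᵖ ⊕ ℝ^{n−p} which is a direct sum of curvature tensors on the factors (i.e., R(x,y,z,w) = 0 whenever the arguments mix the two factors nontrivially, as for a Riemannian product), the curvature operator of the second kind has kernel of dimension at least p(n−p); explicitly, all symmetrized tensors eⁱ⊗eʲ + eʲ⊗eⁱ with eᵢ in the first factor and eⱼ in the second lie in the kernel. -/
/-- An algebraic curvature tensor on `ℝⁿ`. -/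
structure CurvTensor (n : ℕ) where
  R : Fin n → Fin n → Fin n → Fin n → ℝ
  antisymm_fst : ∀ i j k l, R j i k l = - R i j k l
  antisymm_snd : ∀ i j k l, R i j l k = - R i j k l
  pair_symm : ∀ i j k l, R k l i j = R i j k l
  bianchi : ∀ i j k l, R i j k l + R j k i l + R k i j l = 0

/-- The operator `R̄` on `(0,2)`-tensors, `(R̄ h)_{ij} = ∑_{k,l} R_{iklj} h_{kl}`. -/
noncomputable def Rbar {n : ℕ} (T : CurvTensor n) :
    Matrix (Fin n) (Fin n) ℝ →ₗ[ℝ] Matrix (Fin n) (Fin n) ℝ where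
  toFun h := Matrix.of fun i j => ∑ k, ∑ l, T.R i k l j * h k l
  map_add' h₁ h₂ := by
    ext i j
    simp [Matrix.add_apply, mul_add, Finset.sum_add_distrib]
  map_smul' c h := by
    ext i j
    simp [Matrix.smul_apply, Finset.mul_sum, mul_left_comm]

/-- Orthogonal projection of `(0,2)`-tensors onto trace-free symmetric tensors `S²₀`. -/
noncomputable def projS20 (n : ℕ) :
    Matrix (Fin n) (Fin n) ℝ →ₗ[ℝ] Matrix (Fin n) (Fin n) ℝ where
  toFun h := Matrix.of fun i j =>
    (h i j + h j i) / 2 - if i = j then Matrix.trace h / n else 0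
  map_add' a b := by
    ext i j
    by_cases h : i = j <;>
      simp [Matrix.add_apply, Matrix.trace_add, h] <;> ring
  map_smul' c a := by
    ext i j
    by_cases h : i = j <;>
      simp [Matrix.smul_apply, Matrix.trace_smul, smul_eq_mul, h] <;> ring

/-- The curvature operator of the second kind, `𝓡 = pr ∘ R̄ ∘ pr`. -/
noncomputable def calR {n : ℕ} (T : CurvTensor n) :
    Matrix (Fin n) (Fin n) ℝ →ₗ[ℝ] Matrix (Fin n) (Fin n) ℝ :=
  projS20 n ∘ₗ Rbar T ∘ₗ projS20 n

/-- The symmetrized tensor `eⁱ⊗eʲ + eʲ⊗eⁱ`. -/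
noncomputable def Esym {n : ℕ} (i j : Fin n) : Matrix (Fin n) (Fin n) ℝ :=
  Matrix.single i j 1 + Matrix.single j i 1

lemma Esym_apply {n : ℕ} (i j a b : Fin n) :
    Esym i j a b = (if i = a ∧ j = b then (1:ℝ) else 0) + (if j = a ∧ i = b then 1 else 0) := by
  simp [Esym, Matrix.single]

lemma projS20_Esym {n : ℕ} (i j : Fin n) (hij : i ≠ j) :
    projS20 n (Esym i j) = Esym i j := by
  have htr : Matrix.trace (Esym i j) = 0 := by
    simp only [Matrix.trace, Matrix.diag, Esym_apply]
    apply Finset.sum_eq_zero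
    intro x _
    rcases eq_or_ne i x with rfl | h
    · simp [hij, (Ne.symm hij)]
    · rcases eq_or_ne j x with rfl | h2
      · simp [h]
      · simp [h, h2]
  ext a b
  simp only [projS20, LinearMap.coe_mk, AddHom.coe_mk, Matrix.of_apply, htr]
  have hsymm : Esym i j b a = Esym i j a b := by
    simp [Esym_apply, and_comm]; ring
  rw [hsymm]
  simp only [zero_div, ite_self]
  ring

lemma Rbar_Esym {n : ℕ} (T : CurvTensor n) (i j a b : Fin n) (hij : i ≠ j) :
    Rbar T (Esym i j) a b = T.R a i j b + T.R a j i b := by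
  simp only [Rbar, LinearMap.coe_mk, AddHom.coe_mk, Matrix.of_apply, Esym_apply,
    mul_add, mul_ite, mul_one, mul_zero, Finset.sum_add_distrib]
  have key : ∀ u v : Fin n, (∑ x : Fin n, ∑ y : Fin n, if u = x ∧ v = y then T.R a x y b else 0) = T.R a u v b := by
    intro u v
    rw [Finset.sum_eq_single_of_mem u (Finset.mem_univ _)
      (by intro x _ hx; apply Finset.sum_eq_zero; intro y _; simp [Ne.symm hx])]
    rw [Finset.sum_eq_single_of_mem v (Finset.mem_univ _)
      (by intro y _ hy; simp [Ne.symm hy])]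
    simp
  rw [key, key]

lemma vanish_mixed {n p : ℕ} (T : CurvTensor n)
    (hprod : ∀ i j k l : Fin n, (j : ℕ) < p → p ≤ (k : ℕ) → T.R i j k l = 0)
    (a j i b : Fin n) (hj : p ≤ (j : ℕ)) (hi : (i : ℕ) < p) : T.R a j i b = 0 := by
  have h1 : T.R a j b i = - T.R a j i b := T.antisymm_snd a j i b
  have h2 : T.R a j b i = T.R b i a j := (T.pair_symm a j b i).symm
  have h3 : T.R b i a j = - T.R b i j a := T.antisymm_snd b i j a
  have h4 : T.R b i j a = 0 := hprod b i j a hi hj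
  have := h1.symm.trans (h2.trans (h3.trans (by rw [h4, neg_zero])))
  linarith

lemma Esym_in_ker {n p : ℕ} (T : CurvTensor n)
    (hprod : ∀ i j k l : Fin n, (j : ℕ) < p → p ≤ (k : ℕ) → T.R i j k l = 0)
    (i j : Fin n) (hi : (i : ℕ) < p) (hj : p ≤ (j : ℕ)) : calR T (Esym i j) = 0 := by
  have hij : i ≠ j := by intro h; rw [h] at hi; omega
  have hR : Rbar T (Esym i j) = 0 := by
    ext a b
    rw [Rbar_Esym T i j a b hij, hprod a i j b hi hj, vanish_mixed T hprod a j i b hj hi]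
    simp
  simp only [calR, LinearMap.comp_apply, projS20_Esym i j hij, hR, map_zero]


/-- For an algebraic curvature tensor on `ℝⁿ = ℝᵖ ⊕ ℝ^{n-p}` with product structure
(`R_{ijkl} = 0` whenever the second index lies in the first factor and the third in the
second factor), all symmetrized tensors `eⁱ⊗eʲ + eʲ⊗eⁱ` with `eᵢ` in the first factor and
`eⱼ` in the second lie in the kernel of the curvature operator of the second kind, and the
kernel has dimension at least `p(n-p)`. -/
theorem calR_product_kernel (n p : ℕ) (hp : p ≤ n) (T : CurvTensor n)
    (hprod : ∀ i j k l : Fin n, (j : ℕ) < p → p ≤ (k : ℕ) → T.R i j k l = 0) :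
    (∀ i j : Fin n, (i : ℕ) < p → p ≤ (j : ℕ) → calR T (Esym i j) = 0) ∧
    p * (n - p) ≤ Module.finrank ℝ (LinearMap.ker (calR T)) := by
  refine ⟨fun i j hi hj => Esym_in_ker T hprod i j hi hj, ?_⟩
  have hx2 : ∀ y : Fin p × Fin (n - p), p + (y.2 : ℕ) < n := by
    intro y; have := y.2.isLt; omega
  set g : Fin p × Fin (n - p) → Matrix (Fin n) (Fin n) ℝ :=
    fun y => Esym (Fin.castLE hp y.1) ⟨p + y.2, hx2 y⟩ with hg
  have hmem : ∀ y, g y ∈ LinearMap.ker (calR T) := fun y =>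
    LinearMap.mem_ker.2 (Esym_in_ker T hprod _ _ (by simp) (by simp))
  have hentry : ∀ x y : Fin p × Fin (n - p),
      g y (Fin.castLE hp x.1) ⟨p + x.2, hx2 x⟩ = if y = x then 1 else 0 := by
    intro x y
    rw [hg]
    simp only
    rw [Esym_apply]
    have hne : (⟨p + (y.2 : ℕ), hx2 y⟩ : Fin n) ≠ Fin.castLE hp x.1 := by
      intro h
      have := congrArg Fin.val h
      simp at this
      omega
    have h2z : (if (⟨p + (y.2 : ℕ), hx2 y⟩ : Fin n) = Fin.castLE hp x.1 ∧
        Fin.castLE hp y.1 = ⟨p + (x.2 : ℕ), hx2 x⟩ then (1:ℝ) else 0) = 0 :=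
      if_neg (fun h => hne h.1)
    rw [h2z, add_zero]
    by_cases h : y = x
    · subst h; simp
    · rw [if_neg, if_neg h]
      rintro ⟨h1, h2⟩
      apply h
      have e1 : (y.1 : ℕ) = x.1 := by simpa using congrArg Fin.val h1
      have e2 : p + (y.2 : ℕ) = p + (x.2 : ℕ) := by simpa using congrArg Fin.val h2
      exact Prod.ext (Fin.ext e1) (Fin.ext (by omega))
  have hli : LinearIndependent ℝ g := by
    rw [Fintype.linearIndependent_iff]
    intro c hc x
    have h0 := congrFun (congrFun hc (Fin.castLE hp x.1)) ⟨p + x.2, hx2 x⟩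
    have hsum : (∑ y, c y • g y) (Fin.castLE hp x.1) ⟨p + x.2, hx2 x⟩
        = ∑ y, c y * (if y = x then 1 else 0) := by
      rw [Matrix.sum_apply]
      exact Finset.sum_congr rfl fun y _ => by rw [Matrix.smul_apply, hentry x y, smul_eq_mul]
    rw [hsum] at h0
    simpa [mul_ite, Finset.sum_ite_eq'] using h0
  have hliK : LinearIndependent ℝ
      (fun y => (⟨g y, hmem y⟩ : LinearMap.ker (calR T))) :=
    hli.of_comp (LinearMap.ker (calR T)).subtype
  have hcard := hliK.fintype_card_le_finrank
  simpa [Fintype.card_prod] using hcard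
end

section
/- For the Riemannian product Sᵖ × S^{n−p} of unit round spheres (2 ≤ p ≤ n−2 or p ≥ 1, n−p ≥ 2), the curvature operator of the second kind has eigenvalues 0 (with multiplicity p(n−p)), 1 (with multiplicity p(p+1)/2 + (n−p)(n−p+1)/2 − 2), and 1 − 2p(n−p)/n (with multiplicity 1). -/
/-- The algebraic curvature tensor of the Riemannian product of unit round spheres
`Sᵖ × S^{n-p}`: the constant curvature `1` tensor on each factor. -/
noncomputable def Rprod (n p : ℕ) (i j k l : Fin n) : ℝ :=
  if ((i : ℕ) < p ∧ (j : ℕ) < p ∧ (k : ℕ) < p ∧ (l : ℕ) < p) ∨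
     (p ≤ (i : ℕ) ∧ p ≤ (j : ℕ) ∧ p ≤ (k : ℕ) ∧ p ≤ (l : ℕ)) then
    (if i = k then (1 : ℝ) else 0) * (if j = l then 1 else 0) -
      (if i = l then (1 : ℝ) else 0) * (if j = k then 1 else 0)
  else 0

/-- The Ricci curvature of `Sᵖ × S^{n-p}`. -/
noncomputable def RicProd (n p : ℕ) (a b : Fin n) : ℝ := ∑ i, Rprod n p a i b i

/-- The curvature operator of the second kind of `Sᵖ × S^{n-p}` acting on (trace-free
symmetric) `(0,2)`-tensors: `𝓡(h) = R̄(h) + ⟨Ric, h⟩ g / n`. -/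
noncomputable def calRProd (n p : ℕ) (h : Matrix (Fin n) (Fin n) ℝ) :
    Matrix (Fin n) (Fin n) ℝ :=
  Matrix.of fun i j =>
    (∑ k, ∑ l, Rprod n p i k l j * h k l) +
      (∑ k, ∑ l, RicProd n p k l * h k l) / n * (if i = j then 1 else 0)

/-- The diagonal tensor `eⁱ⊗eⁱ`. -/
noncomputable def Ediag {n : ℕ} (i : Fin n) : Matrix (Fin n) (Fin n) ℝ :=
  Matrix.single i i 1

/-- The first-kind curvature sum of `Rprod` against a tensor `h`. -/
lemma sum_Rprod (n p : ℕ) (h : Matrix (Fin n) (Fin n) ℝ) (i j : Fin n) :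
    (∑ k, ∑ l, Rprod n p i k l j * h k l)
      = (if ((i:ℕ) < p ∧ (j:ℕ) < p) ∨ (p ≤ (i:ℕ) ∧ p ≤ (j:ℕ)) then h j i else 0)
        - (if i = j then
            ∑ k : Fin n, (if ((i:ℕ) < p ∧ (k:ℕ) < p) ∨ (p ≤ (i:ℕ) ∧ p ≤ (k:ℕ)) then h k k else 0)
          else 0) := by
  have step : ∀ k l : Fin n, Rprod n p i k l j * h k l =
      (if l = i then (if k = j then (if ((i:ℕ) < p ∧ (j:ℕ) < p) ∨ (p ≤ (i:ℕ) ∧ p ≤ (j:ℕ)) then h k l else 0) else 0) else 0)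
      - (if i = j then (if l = k then (if ((i:ℕ) < p ∧ (k:ℕ) < p) ∨ (p ≤ (i:ℕ) ∧ p ≤ (k:ℕ)) then h k l else 0) else 0) else 0) := by
    intro k l
    by_cases hB : (((i:ℕ) < p ∧ (k:ℕ) < p ∧ (l:ℕ) < p ∧ (j:ℕ) < p) ∨
        (p ≤ (i:ℕ) ∧ p ≤ (k:ℕ) ∧ p ≤ (l:ℕ) ∧ p ≤ (j:ℕ)))
    · have h1 : ((i:ℕ) < p ∧ (j:ℕ) < p) ∨ (p ≤ (i:ℕ) ∧ p ≤ (j:ℕ)) := by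
        rcases hB with ⟨a,_,_,b⟩|⟨a,_,_,b⟩
        · exact Or.inl ⟨a,b⟩
        · exact Or.inr ⟨a,b⟩
      have h2 : ((i:ℕ) < p ∧ (k:ℕ) < p) ∨ (p ≤ (i:ℕ) ∧ p ≤ (k:ℕ)) := by
        rcases hB with ⟨a,b,_,_⟩|⟨a,b,_,_⟩
        · exact Or.inl ⟨a,b⟩
        · exact Or.inr ⟨a,b⟩
      simp only [Rprod, if_pos hB, if_pos h1, if_pos h2]
      split_ifs <;> subst_vars <;> simp_all
    · simp only [Rprod, if_neg hB, zero_mul]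
      symm
      split_ifs <;> simp_all [Fin.ext_iff] <;> omega
  simp only [step, Finset.sum_sub_distrib]
  congr 1
  · simp [Finset.sum_ite_eq, Finset.sum_ite_eq']
  · rcases eq_or_ne i j with rfl | hij
    · simp [Finset.sum_ite_eq, Finset.sum_ite_eq']
    · simp [hij]

/-- Summing a two-valued step function over `Fin n`. -/
lemma count_lemma (n p : ℕ) (hpn : p ≤ n) (a b : ℝ) :
    ∑ i : Fin n, (if (i : ℕ) < p then a else b) = p * a + ((n : ℝ) - p) * b := by
  rw [Fin.sum_univ_eq_sum_range (fun i => if i < p then a else b), Finset.range_eq_Ico,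
    ← Finset.sum_Ico_consecutive _ (Nat.zero_le p) hpn]
  have h1 : ∑ i ∈ Finset.Ico 0 p, (if i < p then a else b) = p * a := by
    rw [Finset.sum_congr rfl (fun i hi => if_pos (Finset.mem_Ico.1 hi).2)]
    simp [mul_comm]
  have h2 : ∑ i ∈ Finset.Ico p n, (if i < p then a else b) = ((n : ℝ) - p) * b := by
    rw [Finset.sum_congr rfl (fun i hi => if_neg (not_lt.2 (Finset.mem_Ico.1 hi).1))]
    rw [Finset.sum_const, Nat.card_Ico, nsmul_eq_mul, Nat.cast_sub hpn]
  rw [h1, h2]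

/-- The Ricci tensor of the product is diagonal, with entries `p - 1` and `n - p - 1`. -/
lemma ric_eq (n p : ℕ) (hpn : p ≤ n) (k l : Fin n) :
    RicProd n p k l =
      if k = l then (if (k : ℕ) < p then (p : ℝ) - 1 else (n : ℝ) - p - 1) else 0 := by
  have step : ∀ i : Fin n, Rprod n p k i l i =
      (if k = l then ((if ((k:ℕ) < p ∧ (i:ℕ) < p) ∨ (p ≤ (k:ℕ) ∧ p ≤ (i:ℕ)) then (1:ℝ) else 0)
        - (if i = k then 1 else 0)) else 0) := by
    intro i
    unfold Rprod
    split_ifs <;> subst_vars <;> simp_all <;> omega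
  rw [RicProd]
  simp only [step]
  rcases eq_or_ne k l with rfl | hkl
  · simp only [eq_self_iff_true, if_true, Finset.sum_sub_distrib]
    rcases lt_or_ge (k : ℕ) p with hk | hk
    · have : ∀ i : Fin n, (if ((k:ℕ) < p ∧ (i:ℕ) < p) ∨ (p ≤ (k:ℕ) ∧ p ≤ (i:ℕ)) then (1:ℝ) else 0)
          = (if (i:ℕ) < p then (1:ℝ) else 0) := by
        intro i; split_ifs <;> simp_all <;> omega
      simp only [this]
      rw [count_lemma n p hpn 1 0, Finset.sum_ite_eq' Finset.univ k (fun _ => (1:ℝ))]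
      simp [hk]
    · have : ∀ i : Fin n, (if ((k:ℕ) < p ∧ (i:ℕ) < p) ∨ (p ≤ (k:ℕ) ∧ p ≤ (i:ℕ)) then (1:ℝ) else 0)
          = (if (i:ℕ) < p then (0:ℝ) else 1) := by
        intro i; split_ifs <;> simp_all <;> omega
      simp only [this]
      rw [count_lemma n p hpn 0 1, Finset.sum_ite_eq' Finset.univ k (fun _ => (1:ℝ))]
      simp [not_lt.2 hk]
  · simp [hkl]

/-- The Ricci contraction `⟨Ric, h⟩` reduces to a diagonal sum. -/
lemma ric_trace (n p : ℕ) (hpn : p ≤ n) (h : Matrix (Fin n) (Fin n) ℝ) :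
    (∑ k, ∑ l, RicProd n p k l * h k l)
      = ∑ k : Fin n, (if (k : ℕ) < p then (p : ℝ) - 1 else (n : ℝ) - p - 1) * h k k := by
  refine Finset.sum_congr rfl fun k _ => ?_
  simp only [ric_eq n p hpn, ite_mul, zero_mul]
  simp [Finset.sum_ite_eq]

lemma Esym_diag {n : ℕ} {i j : Fin n} (hij : i ≠ j) (k : Fin n) : Esym i j k k = 0 := by
  rw [Esym_apply, if_neg, if_neg, add_zero]
  · rintro ⟨rfl, rfl⟩; exact hij rfl
  · rintro ⟨rfl, rfl⟩; exact hij rfl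

lemma Ediag_sub_apply {n : ℕ} (i j a b : Fin n) :
    (Ediag i - Ediag j) a b = (if i = a ∧ i = b then (1:ℝ) else 0) -
      (if j = a ∧ j = b then 1 else 0) := by
  simp [Ediag, Matrix.single]

/-- The eigenspace decomposition of the curvature operator of the second kind of
`Sᵖ × S^{n-p}`: the mixed tensors `E^{ij}` (`i ≤ p < j`) lie in the kernel; the tensors
`E^{ij}` with `i < j` in the same factor, together with the diagonal differences within each
factor, are eigenvectors with eigenvalue `1`; and the trace-free multiple of the difference
of the two factor metrics is an eigenvector with eigenvalue `1 - 2p(n-p)/n`. -/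
theorem calRProd_eigenvalues (n p : ℕ) (hp1 : 1 ≤ p) (hpn : p < n) :
    (∀ i j : Fin n, (i : ℕ) < p → p ≤ (j : ℕ) → calRProd n p (Esym i j) = 0) ∧
    (∀ i j : Fin n, i ≠ j →
      (((i : ℕ) < p ∧ (j : ℕ) < p) ∨ (p ≤ (i : ℕ) ∧ p ≤ (j : ℕ))) →
      calRProd n p (Esym i j) = Esym i j) ∧
    (∀ i j : Fin n,
      (((i : ℕ) < p ∧ (j : ℕ) < p) ∨ (p ≤ (i : ℕ) ∧ p ≤ (j : ℕ))) →
      calRProd n p (Ediag i - Ediag j) = Ediag i - Ediag j) ∧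
    (calRProd n p
        (Matrix.of fun a b : Fin n => if a = b then
            (if (a : ℕ) < p then (1 : ℝ) / p else 0) -
              (if p ≤ (a : ℕ) then (1 : ℝ) / (n - p) else 0)
          else 0)
      = (1 - 2 * p * ((n : ℝ) - p) / n) •
        Matrix.of fun a b : Fin n => if a = b then
            (if (a : ℕ) < p then (1 : ℝ) / p else 0) -
              (if p ≤ (a : ℕ) then (1 : ℝ) / (n - p) else 0)
          else 0) := by
  refine ⟨?_, ?_, ?_, ?_⟩
  -- Part 1: mixed tensors are in the kernel.
  · intro i j hi hj
    have hij : i ≠ j := fun h => by rw [h] at hi; omega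
    ext a b
    rw [calRProd, Matrix.of_apply, Matrix.zero_apply, sum_Rprod, ric_trace n p hpn.le]
    simp only [Esym_diag hij, mul_zero, Finset.sum_const_zero, ite_self, sub_zero, zero_div,
      zero_mul, add_zero]
    split_ifs with hab
    · rw [Esym_apply, if_neg, if_neg, add_zero]
      · rintro ⟨rfl, rfl⟩; rcases hab with ⟨h1, h2⟩ | ⟨h1, h2⟩ <;> omega
      · rintro ⟨rfl, rfl⟩; rcases hab with ⟨h1, h2⟩ | ⟨h1, h2⟩ <;> omega
    · rfl
  -- Part 2: same-factor off-diagonal tensors have eigenvalue 1.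
  · intro i j hij hblk
    ext a b
    rw [calRProd, Matrix.of_apply, sum_Rprod, ric_trace n p hpn.le]
    simp only [Esym_diag hij, mul_zero, Finset.sum_const_zero, ite_self, sub_zero, zero_div,
      zero_mul, add_zero]
    split_ifs with hab
    · rw [Esym_apply, Esym_apply, add_comm]
      congr 1 <;> simp [and_comm]
    · symm
      rw [Esym_apply, if_neg, if_neg, add_zero]
      · rintro ⟨rfl, rfl⟩; exact hab (by rcases hblk with ⟨h1,h2⟩|⟨h1,h2⟩ <;> omega)
      · rintro ⟨rfl, rfl⟩; exact hab (by rcases hblk with ⟨h1,h2⟩|⟨h1,h2⟩ <;> omega)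
  -- Part 3: same-factor diagonal differences have eigenvalue 1.
  · intro i j hblk
    ext a b
    have t1 : ∀ a : Fin n,
        (∑ k : Fin n, if ((a:ℕ) < p ∧ (k:ℕ) < p) ∨ (p ≤ (a:ℕ) ∧ p ≤ (k:ℕ))
          then (Ediag i - Ediag j) k k else 0) = 0 := by
      intro a
      have e : ∀ k : Fin n,
          (if ((a:ℕ) < p ∧ (k:ℕ) < p) ∨ (p ≤ (a:ℕ) ∧ p ≤ (k:ℕ)) then (Ediag i - Ediag j) k k else 0)
          = (if i = k then (if ((a:ℕ) < p ∧ (i:ℕ) < p) ∨ (p ≤ (a:ℕ) ∧ p ≤ (i:ℕ)) then (1:ℝ) else 0) else 0)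
            - (if j = k then (if ((a:ℕ) < p ∧ (j:ℕ) < p) ∨ (p ≤ (a:ℕ) ∧ p ≤ (j:ℕ)) then (1:ℝ) else 0) else 0) := by
        intro k
        rw [Ediag_sub_apply]
        split_ifs <;> subst_vars <;> simp_all <;> omega
      simp only [e, Finset.sum_sub_distrib, Finset.sum_ite_eq, Finset.mem_univ, if_true]
      split_ifs <;> first | (exfalso; omega) | ring | norm_num
    have t2 : (∑ k : Fin n, (if (k : ℕ) < p then (p : ℝ) - 1 else (n : ℝ) - p - 1) *
        (Ediag i - Ediag j) k k) = 0 := by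
      have e : ∀ k : Fin n,
          (if (k : ℕ) < p then (p : ℝ) - 1 else (n : ℝ) - p - 1) * (Ediag i - Ediag j) k k
          = (if i = k then (if (i:ℕ) < p then (p:ℝ) - 1 else (n:ℝ) - p - 1) else 0)
            - (if j = k then (if (j:ℕ) < p then (p:ℝ) - 1 else (n:ℝ) - p - 1) else 0) := by
        intro k
        rw [Ediag_sub_apply]
        split_ifs <;> subst_vars <;> simp_all <;> ring
      simp only [e, Finset.sum_sub_distrib, Finset.sum_ite_eq, Finset.mem_univ, if_true]
      split_ifs <;> first | (exfalso; omega) | ring | norm_num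
    rw [calRProd, Matrix.of_apply, sum_Rprod, ric_trace n p hpn.le, t2, t1]
    simp only [zero_div, zero_mul, add_zero, ite_self, sub_zero]
    rcases eq_or_ne a b with rfl | hab
    · rw [if_pos]
      rcases lt_or_ge (a : ℕ) p with h | h
      exacts [Or.inl ⟨h, h⟩, Or.inr ⟨h, h⟩]
    · have z : ∀ x y : Fin n, x ≠ y → (Ediag i - Ediag j) x y = 0 := by
        intro x y hxy
        rw [Ediag_sub_apply, if_neg, if_neg, sub_zero]
        · rintro ⟨rfl, rfl⟩; exact hxy rfl
        · rintro ⟨rfl, rfl⟩; exact hxy rfl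
      rw [z b a hab.symm, z a b hab, ite_self]
  -- Part 4: the trace-free difference of the factor metrics.
  · have hp0 : (0:ℝ) < (p:ℝ) := by exact_mod_cast hp1
    have hnp : (0:ℝ) < (n:ℝ) - (p:ℝ) := by
      have : (p:ℝ) < (n:ℝ) := by exact_mod_cast hpn
      linarith
    have hn0 : (0:ℝ) < (n:ℝ) := by linarith
    set M : Matrix (Fin n) (Fin n) ℝ := Matrix.of fun a b : Fin n => if a = b then
        (if (a : ℕ) < p then (1 : ℝ) / p else 0) -
          (if p ≤ (a : ℕ) then (1 : ℝ) / (n - p) else 0)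
      else 0 with hM
    have hMd : ∀ k : Fin n, M k k = (if (k : ℕ) < p then (1:ℝ)/(p:ℝ) else -(1/((n:ℝ)-(p:ℝ)))) := by
      intro k
      rw [hM]
      simp only [Matrix.of_apply, eq_self_iff_true, if_true]
      split_ifs <;> first | (exfalso; omega) | ring
    have t1 : ∀ a : Fin n,
        (∑ k : Fin n, if ((a:ℕ) < p ∧ (k:ℕ) < p) ∨ (p ≤ (a:ℕ) ∧ p ≤ (k:ℕ)) then M k k else 0)
          = (if (a:ℕ) < p then (1:ℝ) else -1) := by
      intro a
      rcases lt_or_ge (a:ℕ) p with ha | ha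
      · have e : ∀ k : Fin n,
            (if ((a:ℕ) < p ∧ (k:ℕ) < p) ∨ (p ≤ (a:ℕ) ∧ p ≤ (k:ℕ)) then M k k else 0)
              = (if (k:ℕ) < p then (1:ℝ)/(p:ℝ) else 0) := by
          intro k
          rw [hMd k]
          split_ifs <;> first | rfl | (exfalso; omega)
        simp only [e]
        rw [count_lemma n p hpn.le (1/(p:ℝ)) 0, if_pos ha]
        field_simp
        ring
      · have e : ∀ k : Fin n,
            (if ((a:ℕ) < p ∧ (k:ℕ) < p) ∨ (p ≤ (a:ℕ) ∧ p ≤ (k:ℕ)) then M k k else 0)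
              = (if (k:ℕ) < p then (0:ℝ) else -(1/((n:ℝ)-(p:ℝ)))) := by
          intro k
          rw [hMd k]
          split_ifs <;> first | rfl | (exfalso; omega)
        simp only [e]
        rw [count_lemma n p hpn.le 0 (-(1/((n:ℝ)-(p:ℝ)))), if_neg (not_lt.2 ha)]
        field_simp
        ring
    have t2 : (∑ k : Fin n, (if (k : ℕ) < p then (p : ℝ) - 1 else (n : ℝ) - p - 1) * M k k)
        = 2*(p:ℝ) - n := by
      have e : ∀ k : Fin n, (if (k : ℕ) < p then (p : ℝ) - 1 else (n : ℝ) - p - 1) * M k k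
          = (if (k:ℕ) < p then ((p:ℝ)-1)/(p:ℝ) else -(((n:ℝ)-p-1)/((n:ℝ)-p))) := by
        intro k
        rw [hMd k]
        split_ifs with h
        · ring
        · ring
      simp only [e]
      rw [count_lemma n p hpn.le (((p:ℝ)-1)/(p:ℝ)) (-(((n:ℝ)-p-1)/((n:ℝ)-p)))]
      field_simp
      ring
    ext a b
    rw [calRProd, Matrix.of_apply, sum_Rprod, ric_trace n p hpn.le, t2, t1,
      Matrix.smul_apply]
    rcases eq_or_ne a b with rfl | hab
    · have hblk : ((a:ℕ) < p ∧ (a:ℕ) < p) ∨ (p ≤ (a:ℕ) ∧ p ≤ (a:ℕ)) := by omega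
      rw [if_pos hblk, if_pos rfl, if_pos rfl, smul_eq_mul, hMd a]
      rcases lt_or_ge (a:ℕ) p with h | h <;>
        [simp only [if_pos h]; simp only [if_neg (not_lt.2 h)]] <;> field_simp <;> ring
    · have hz : ∀ x y : Fin n, x ≠ y → M x y = 0 := by
        intro x y hxy
        rw [hM]
        simp only [Matrix.of_apply, if_neg hxy]
      rw [hz b a hab.symm, hz a b hab]
      simp [hab]
end

section
/- Let λ₁ ≤ … ≤ λ_N be real numbers and suppose there exist nonnegative weights ω_α with max_α ω_α ≤ c and Σ_α ω_α = T such that Σ_α ω_α λ_α ≤ 0 (weights applied to a permutation of the eigenvalues). If λ₁ + … + λ_{⌊k⌋} + (k−⌊k⌋)λ_{⌊k⌋+1} ≥ 0 for some k < T/c, then either λ₁ ≥ 0 (all eigenvalues nonnegative... i.e. the list is 1-nonnegative) or Σ_α ω_α λ_α > 0 for every such weight system. (Weight principle dichotomy.) -/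
/-- The weight principle dichotomy: let `λ₁ ≤ … ≤ λ_N` be the (ordered) eigenvalues and
suppose the list is `k`-nonnegative for some `k < T/c`.  Then either all eigenvalues are
nonnegative (the list is `1`-nonnegative), or every weighted sum `∑ ω_α λ_α` with weights
`0 ≤ ω_α ≤ c` of total weight `∑ ω_α = T` is positive. -/
theorem weight_principle (N : ℕ) (lam : ℕ → ℝ)
    (hsort : ∀ i j : ℕ, i ≤ j → j < N → lam i ≤ lam j)
    (c T : ℝ) (hc : 0 < c) (k : ℝ) (hk1 : 1 ≤ k) (hkT : k < T / c)
    (hnn : kNonneg lam k) :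
    (∀ i < N, 0 ≤ lam i) ∨
      (∀ w : ℕ → ℝ, (∀ i < N, 0 ≤ w i ∧ w i ≤ c) →
        (∑ i ∈ Finset.range N, w i) = T →
        0 < ∑ i ∈ Finset.range N, w i * lam i) := by
  by_cases hpos : ∀ i < N, 0 ≤ lam i
  · exact Or.inl hpos
  right
  push_neg at hpos
  obtain ⟨i0, hi0N, hi0⟩ := hpos
  intro w hw hT
  set m := ⌊k⌋₊ with hmdef
  have hk0 : (0:ℝ) ≤ k := by linarith
  have hmk : (m : ℝ) ≤ k := Nat.floor_le hk0
  have hm1 : 1 ≤ m := Nat.le_floor (by exact_mod_cast hk1)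
  have hckT : k * c < T := (lt_div_iff₀ hc).mp hkT
  have h0 : lam 0 < 0 := lt_of_le_of_lt (hsort 0 i0 (Nat.zero_le _) hi0N) hi0
  have hwsum : (∑ i ∈ Finset.range N, w i) ≤ (N : ℝ) * c := by
    calc ∑ i ∈ Finset.range N, w i ≤ ∑ _i ∈ Finset.range N, c :=
          Finset.sum_le_sum fun i hi => (hw i (Finset.mem_range.mp hi)).2
      _ = (N : ℝ) * c := by simp [mul_comm]
  by_cases hmN : m < N
  swap
  · -- then T > k*c ≥ m*c ≥ N*c ≥ ∑ w = T, contradiction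
    exfalso
    have hNm : (N : ℝ) ≤ (m : ℝ) := by exact_mod_cast Nat.le_of_not_lt hmN
    have h1 : (N : ℝ) * c ≤ k * c :=
      mul_le_mul_of_nonneg_right (le_trans hNm hmk) hc.le
    linarith [hT ▸ hwsum]
  -- main case : m < N
  have hnn' : 0 ≤ (∑ i ∈ Finset.range m, lam i) + (k - (m : ℝ)) * lam m := hnn
  have hlamm : 0 < lam m := by
    by_contra hlm
    push_neg at hlm
    obtain ⟨m', hm'⟩ := Nat.exists_eq_succ_of_ne_zero (by omega : m ≠ 0)
    have h1 : ∑ i ∈ Finset.range m', lam (i + 1) ≤ 0 :=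
      Finset.sum_nonpos fun i hi => by
        have hi' := Finset.mem_range.mp hi
        exact le_trans (hsort (i + 1) m (by omega) hmN) hlm
    have h2 : ∑ i ∈ Finset.range m, lam i ≤ lam 0 := by
      rw [hm', Finset.sum_range_succ']
      linarith
    have h3 : (k - (m : ℝ)) * lam m ≤ 0 :=
      mul_nonpos_of_nonneg_of_nonpos (by linarith) hlm
    linarith
  -- lower bound on weighted sum
  have expand : ∑ i ∈ Finset.range N, w i * lam i
      = (∑ i ∈ Finset.range N, w i * (lam i - lam m)) + T * lam m := by
    rw [← hT, Finset.sum_mul, ← Finset.sum_add_distrib]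
    exact Finset.sum_congr rfl fun i _ => by ring
  have hterm : ∀ i ∈ Finset.range N,
      (if i < m then c * (lam i - lam m) else 0) ≤ w i * (lam i - lam m) := by
    intro i hi
    have hiN := Finset.mem_range.mp hi
    by_cases him : i < m
    · simp only [him, if_true]
      exact mul_le_mul_of_nonpos_right (hw i hiN).2
        (sub_nonpos.mpr (hsort i m him.le hmN))
    · simp only [him, if_false]
      exact mul_nonneg (hw i hiN).1
        (sub_nonneg.mpr (hsort m i (Nat.le_of_not_lt him) hiN))
  have hsplit : ∑ i ∈ Finset.range N, (if i < m then c * (lam i - lam m) else 0)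
      = ∑ i ∈ Finset.range m, c * (lam i - lam m) := by
    rw [← Finset.sum_subset (Finset.range_subset_range.mpr hmN.le)
      (fun x _ hx => by simp [Nat.le_of_not_lt (fun h => hx (Finset.mem_range.mpr h))] )]
    exact Finset.sum_congr rfl fun i hi => by simp [Finset.mem_range.mp hi]
  have hval : ∑ i ∈ Finset.range m, c * (lam i - lam m)
      = c * (∑ i ∈ Finset.range m, lam i) - (m : ℝ) * (c * lam m) := by
    simp [mul_sub, Finset.sum_sub_distrib, ← Finset.mul_sum, mul_comm]
  have hlow : ∑ i ∈ Finset.range m, c * (lam i - lam m)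
      ≤ ∑ i ∈ Finset.range N, w i * (lam i - lam m) :=
    hsplit ▸ Finset.sum_le_sum hterm
  have hkey : 0 ≤ c * ((∑ i ∈ Finset.range m, lam i) + (k - (m : ℝ)) * lam m) :=
    mul_nonneg hc.le hnn'
  have hfinal : 0 < (T - k * c) * lam m := mul_pos (by linarith) hlamm
  rw [expand]
  nlinarith [hlow, hval, hkey, hfinal]
end
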